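/- Suppose ψ₁ : ℝ² → ℝ is a bounded C² function satisfying |Δψ₁ + (1−3S_d(r)²)ψ₁ − (d²/r²)ψ₁| ≤ C (log r)/r² for r = |z| > 1, where S_d(r) → 1 as r → ∞ and 0 ≤ S_d ≤ 1, and |ψ₁(z)| ≤ C log(1+|z|). Then there is C′ with |ψ₁(z)| ≤ C′/(1+|z|) for all z ∈ ℝ². -/

import Mathlib

noncomputable def lap2 (f : EuclideanSpace ℝ (Fin 2) → ℝ) (x : EuclideanSpace ℝ (Fin 2)) : ℝ :=
  ∑ i : Fin 2, fderiv ℝ (fun y => fderiv ℝ f y (EuclideanSpace.single i 1)) x (EuclideanSpace.single i 1)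


open Filter Set Real

local notation "E2" => EuclideanSpace ℝ (Fin 2)



/-- 1D second derivative test: at a local min, second derivative is nonneg. -/
lemma second_deriv_test {g g' : ℝ → ℝ} {m : ℝ}
    (hg : ∀ᶠ t in nhds (0:ℝ), HasDerivAt g (g' t) t)
    (hmin : IsLocalMin g 0) (hg'' : HasDerivAt g' m 0) : 0 ≤ m := by
  by_contra hm
  push_neg at hm
  have hg'0 : g' 0 = 0 := by
    have := hmin.deriv_eq_zero
    rwa [(hg.self_of_nhds).deriv] at this
  -- slope of g' tends to m < 0
  have hslope := hasDerivAt_iff_tendsto_slope.mp hg''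
  have hev : ∀ᶠ t in nhdsWithin (0:ℝ) {(0:ℝ)}ᶜ, slope g' 0 t < m/2 :=
    hslope.eventually_lt_const (by linarith)
  rw [eventually_nhdsWithin_iff] at hev
  obtain ⟨δ₁, hδ₁, h₁⟩ := Metric.eventually_nhds_iff.mp hev
  obtain ⟨δ₂, hδ₂, h₂⟩ := Metric.eventually_nhds_iff.mp hg
  set δ := min δ₁ δ₂ / 2 with hδdef
  have hδ : 0 < δ := by positivity
  have hneg : ∀ t ∈ Ioo (0:ℝ) δ, g' t < 0 := by
    intro t ht
    have hd : dist t 0 < δ₁ := by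
      rw [Real.dist_eq, sub_zero, abs_of_pos ht.1]
      calc t < δ := ht.2
        _ ≤ δ₁ := by rw [hδdef]; nlinarith [min_le_left δ₁ δ₂]
    have := h₁ hd (by simp [ne_of_gt ht.1])
    rw [slope_def_field, hg'0, sub_zero, sub_zero, div_lt_iff₀ ht.1] at this
    nlinarith [ht.1]
  have hanti : StrictAntiOn g (Icc 0 δ) := by
    apply strictAntiOn_of_deriv_neg (convex_Icc 0 δ)
    · intro t ht
      have hd : dist t 0 < δ₂ := by
        rw [Real.dist_eq, sub_zero, abs_of_nonneg ht.1]
        calc t ≤ δ := ht.2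
          _ < δ₂ := by rw [hδdef]; nlinarith [min_le_right δ₁ δ₂]
      exact ((h₂ hd).differentiableAt).continuousAt.continuousWithinAt
    · intro t ht
      rw [interior_Icc] at ht
      have hd : dist t 0 < δ₂ := by
        rw [Real.dist_eq, sub_zero, abs_of_pos ht.1]
        calc t < δ := ht.2
          _ < δ₂ := by rw [hδdef]; nlinarith [min_le_right δ₁ δ₂]
      rw [(h₂ hd).deriv]
      exact hneg t ht
  have hlt : g δ < g 0 :=
    hanti (left_mem_Icc.mpr hδ.le) (right_mem_Icc.mpr hδ.le) hδ
  -- but local min says g 0 ≤ g t near 0; δ may not be near enough... shrink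
  obtain ⟨δ₃, hδ₃, h₃⟩ := Metric.eventually_nhds_iff.mp hmin
  set t := min δ (δ₃/2) with htdef
  have ht0 : 0 < t := by positivity
  have h1 : g t < g 0 := hanti ⟨le_refl 0, hδ.le⟩ ⟨ht0.le, min_le_left _ _⟩ ht0
  have h2 : g 0 ≤ g t := h₃ (by
    rw [Real.dist_eq, sub_zero, abs_of_pos ht0]
    calc t ≤ δ₃/2 := min_le_right _ _
      _ < δ₃ := by linarith)
  linarith

variable {E : Type*} [NormedAddCommGroup E] [NormedSpace ℝ E]

lemma second_deriv_test_dir {f : E → ℝ} {x : E} (u : E)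
    (hf : ContDiffAt ℝ 2 f x) (hmin : IsLocalMin f x) :
    0 ≤ fderiv ℝ (fun y => fderiv ℝ f y u) x u := by
  set L : ℝ → E := fun t => x + t • u with hL
  have hL0 : L 0 = x := by simp [hL]
  have hLd : ∀ t : ℝ, HasDerivAt L u t := by
    intro t
    simpa [hL] using ((hasDerivAt_id t).smul_const u).const_add x
  have hLc : Continuous L := by fun_prop
  have hLt : Tendsto L (nhds 0) (nhds x) := by
    rw [← hL0]; exact hLc.continuousAt
  have hev : ∀ᶠ y in nhds x, ContDiffAt ℝ 2 f y := hf.eventually (by simp)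
  have hgd : ∀ᶠ t in nhds (0:ℝ), HasDerivAt (f ∘ L) (fderiv ℝ f (L t) u) t := by
    filter_upwards [hLt.eventually hev] with t ht
    have hdf : DifferentiableAt ℝ f (L t) := ht.differentiableAt (by norm_num)
    exact hdf.hasFDerivAt.comp_hasDerivAt t (hLd t)
  have hF : ContDiffAt ℝ 1 (fun y => fderiv ℝ f y u) x := by
    have h1 : ContDiffAt ℝ 1 (fderiv ℝ f) x := hf.fderiv_right (by norm_num)
    exact ((ContinuousLinearMap.apply ℝ ℝ u).contDiff.contDiffAt).comp x h1
  have hFd : DifferentiableAt ℝ (fun y => fderiv ℝ f y u) x :=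
    hF.differentiableAt (by norm_num)
  have hg'' : HasDerivAt (fun t => fderiv ℝ f (L t) u)
      (fderiv ℝ (fun y => fderiv ℝ f y u) x u) 0 := by
    have hF2 : HasFDerivAt (fun y => fderiv ℝ f y u)
        (fderiv ℝ (fun y => fderiv ℝ f y u) x) (L 0) := by
      rw [hL0]; exact hFd.hasFDerivAt
    exact hF2.comp_hasDerivAt 0 (hLd 0)
  have hming : IsLocalMin (f ∘ L) 0 := by
    have : ∀ᶠ t in nhds (0:ℝ), f x ≤ f (L t) := hLt.eventually hmin
    simpa [IsLocalMin, IsMinFilter, hL0] using this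
  have hiter : ∀ᶠ t in nhds (0:ℝ), HasDerivAt (f ∘ L)
      ((fun s => fderiv ℝ f (L s) u) t) t := hgd
  exact second_deriv_test hiter hming hg''

lemma lap2_nonneg_at_localmin {f : EuclideanSpace ℝ (Fin 2) → ℝ} {x : EuclideanSpace ℝ (Fin 2)}
    (hf : ContDiffAt ℝ 2 f x) (hmin : IsLocalMin f x) : 0 ≤ ∑ i : Fin 2,
      fderiv ℝ (fun y => fderiv ℝ f y (EuclideanSpace.single i 1)) x (EuclideanSpace.single i 1) :=
  Finset.sum_nonneg fun i _ => second_deriv_test_dir _ hf hmin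


noncomputable def Qf : E2 → ℝ := fun z => inner ℝ z z

lemma Qf_eq (z : E2) : Qf z = ‖z‖^2 := real_inner_self_eq_norm_sq z

lemma Qf_pos {z : E2} (hz : z ≠ 0) : 0 < Qf z := by
  rw [Qf_eq]
  exact pow_pos (norm_pos_iff.mpr hz) 2

lemma Qf_hasFDerivAt (y : E2) : HasFDerivAt Qf ((2:ℝ) • (innerSL ℝ y)) y := by
  have h := (hasFDerivAt_id (𝕜 := ℝ) y).inner ℝ (hasFDerivAt_id y)
  refine h.congr_fderiv ?_
  ext u
  simp [real_inner_comm, two_smul]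

lemma Qf_contDiff : ContDiff ℝ 2 Qf := contDiff_id.inner ℝ contDiff_id

lemma Qf_sum (x : E2) : Qf x = ∑ i : Fin 2, x i * x i := by
  simp only [Qf, PiLp.inner_apply, RCLike.inner_apply, conj_trivial]

lemma Qf_single (y : E2) (i : Fin 2) : (innerSL ℝ y) (EuclideanSpace.single i 1) = y i := by
  simp [EuclideanSpace.inner_single_right]

lemma single_apply_same (i : Fin 2) : (EuclideanSpace.single i (1:ℝ)) i = 1 := by
  simp [EuclideanSpace.single_apply]

lemma lap2_radial (φ φ₁ φ₂ : ℝ → ℝ)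
    (hφ : ∀ s, 0 < s → HasDerivAt φ (φ₁ s) s)
    (hφ₁ : ∀ s, 0 < s → HasDerivAt φ₁ (φ₂ s) s)
    {x : E2} (hx : x ≠ 0) :
    lap2 (fun z => φ (Qf z)) x = 4 * Qf x * φ₂ (Qf x) + 4 * φ₁ (Qf x) := by
  have hw : ∀ y : E2, y ≠ 0 → HasFDerivAt (fun z => φ (Qf z))
      (φ₁ (Qf y) • ((2:ℝ) • innerSL ℝ y)) y := fun y hy =>
    (hφ _ (Qf_pos hy)).comp_hasFDerivAt y (Qf_hasFDerivAt y)
  have key : ∀ i : Fin 2,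
      fderiv ℝ (fun y => fderiv ℝ (fun z => φ (Qf z)) y (EuclideanSpace.single i 1)) x
        (EuclideanSpace.single i 1)
      = 2 * φ₁ (Qf x) + 4 * φ₂ (Qf x) * (x i) * (x i) := by
    intro i
    have hEv : (fun y => fderiv ℝ (fun z => φ (Qf z)) y (EuclideanSpace.single i 1))
        =ᶠ[nhds x] fun y => φ₁ (Qf y) * (2 * y i) := by
      filter_upwards [IsOpen.mem_nhds isOpen_compl_singleton hx] with y hy
      rw [(hw y (by simpa using hy)).fderiv]
      simp only [ContinuousLinearMap.smul_apply, innerSL_apply_apply,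
        EuclideanSpace.inner_single_right, RCLike.conj_to_real, conj_trivial, smul_eq_mul,
        mul_one, one_mul]
    have h1 : HasFDerivAt (fun y : E2 => φ₁ (Qf y)) (φ₂ (Qf x) • ((2:ℝ) • innerSL ℝ x)) x :=
      (hφ₁ _ (Qf_pos hx)).comp_hasFDerivAt x (Qf_hasFDerivAt x)
    have h2 : HasFDerivAt (fun y : E2 => 2 * y i) ((2:ℝ) • (EuclideanSpace.proj i : E2 →L[ℝ] ℝ)) x :=
      (EuclideanSpace.proj i : E2 →L[ℝ] ℝ).hasFDerivAt.const_mul 2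
    have h3 := h1.fun_mul h2
    rw [hEv.fderiv_eq, h3.fderiv]
    simp only [ContinuousLinearMap.add_apply, ContinuousLinearMap.smul_apply,
      innerSL_apply_apply, EuclideanSpace.inner_single_right,
      conj_trivial, smul_eq_mul, mul_one]
    have : (EuclideanSpace.proj i : E2 →L[ℝ] ℝ) (EuclideanSpace.single i 1) = 1 := by
      simp [single_apply_same]
    rw [this]
    ring
  unfold lap2
  rw [Fin.sum_univ_two, key 0, key 1, Qf_sum x, Fin.sum_univ_two]
  ring

noncomputable def φb (A ε s : ℝ) : ℝ := A * s ^ (-(1:ℝ)/2) + ε * s ^ ((1:ℝ)/2)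
noncomputable def φb1 (A ε s : ℝ) : ℝ :=
  A * (-(1:ℝ)/2) * s ^ (-(3:ℝ)/2) + ε * ((1:ℝ)/2) * s ^ (-(1:ℝ)/2)
noncomputable def φb2 (A ε s : ℝ) : ℝ :=
  A * (-(1:ℝ)/2) * (-(3:ℝ)/2) * s ^ (-(5:ℝ)/2) + ε * ((1:ℝ)/2) * (-(1:ℝ)/2) * s ^ (-(3:ℝ)/2)

lemma φb_deriv (A ε : ℝ) {s : ℝ} (hs : 0 < s) : HasDerivAt (φb A ε) (φb1 A ε s) s := by
  have h1 := (Real.hasDerivAt_rpow_const (p := -(1:ℝ)/2) (Or.inl hs.ne')).const_mul A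
  have h2 := (Real.hasDerivAt_rpow_const (p := (1:ℝ)/2) (Or.inl hs.ne')).const_mul ε
  have h := h1.add h2
  refine h.congr_deriv ?_
  unfold φb1
  norm_num
  ring

lemma φb1_deriv (A ε : ℝ) {s : ℝ} (hs : 0 < s) : HasDerivAt (φb1 A ε) (φb2 A ε s) s := by
  have h1 := (Real.hasDerivAt_rpow_const (p := -(3:ℝ)/2) (Or.inl hs.ne')).const_mul (A * (-(1:ℝ)/2))
  have h2 := (Real.hasDerivAt_rpow_const (p := -(1:ℝ)/2) (Or.inl hs.ne')).const_mul (ε * ((1:ℝ)/2))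
  have h := h1.add h2
  refine h.congr_deriv ?_
  unfold φb2
  norm_num
  ring

lemma rsq_rpow {r : ℝ} (hr : 0 < r) (p : ℝ) : (r^2 : ℝ) ^ p = r ^ (2*p) := by
  rw [← Real.rpow_natCast r 2, ← Real.rpow_mul hr.le]
  norm_num

lemma rpow_neg_nat {r : ℝ} (hr : 0 < r) (n : ℕ) : r ^ (-(n:ℝ)) = (r ^ n)⁻¹ := by
  rw [Real.rpow_neg hr.le, Real.rpow_natCast]

noncomputable def wb (A ε : ℝ) (z : E2) : ℝ := φb A ε (Qf z)

lemma wb_val (A ε : ℝ) {x : E2} (hx : x ≠ 0) : wb A ε x = A / ‖x‖ + ε * ‖x‖ := by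
  have hr : 0 < ‖x‖ := norm_pos_iff.mpr hx
  unfold wb φb
  rw [Qf_eq, rsq_rpow hr, rsq_rpow hr]
  norm_num
  rw [show (-1 : ℝ) = -(1:ℕ) by norm_num, rpow_neg_nat hr 1, pow_one]
  ring

lemma wb_contDiffAt (A ε : ℝ) {x : E2} (hx : x ≠ 0) : ContDiffAt ℝ 2 (wb A ε) x := by
  have hq : Qf x ≠ 0 := (Qf_pos hx).ne'
  have h1 : ContDiffAt ℝ 2 (fun s : ℝ => A * s ^ (-(1:ℝ)/2) + ε * s ^ ((1:ℝ)/2)) (Qf x) :=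
    ((Real.contDiffAt_rpow_const_of_ne hq).const_smul A).add
      ((Real.contDiffAt_rpow_const_of_ne hq).const_smul ε)
  exact h1.comp x Qf_contDiff.contDiffAt

lemma wb_lap2 (A ε : ℝ) {x : E2} (hx : x ≠ 0) :
    lap2 (wb A ε) x = A / ‖x‖^3 + ε / ‖x‖ := by
  have hr : 0 < ‖x‖ := norm_pos_iff.mpr hx
  have h := lap2_radial (φb A ε) (φb1 A ε) (φb2 A ε)
    (fun s hs => φb_deriv A ε hs) (fun s hs => φb1_deriv A ε hs) hx
  rw [show wb A ε = fun z => φb A ε (Qf z) from rfl, h]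
  unfold φb1 φb2
  rw [Qf_eq, rsq_rpow hr, rsq_rpow hr, rsq_rpow hr]
  norm_num
  rw [show (-1 : ℝ) = -(1:ℕ) by norm_num, rpow_neg_nat hr]
  field_simp
  ring

lemma fderiv_apply_diffAt {f : E2 → ℝ} {x : E2} (hf : ContDiffAt ℝ 2 f x) (u : E2) :
    DifferentiableAt ℝ (fun y => fderiv ℝ f y u) x := by
  have h1 : ContDiffAt ℝ 1 (fderiv ℝ f) x := hf.fderiv_right (by norm_num)
  exact (((ContinuousLinearMap.apply ℝ ℝ u).contDiff.contDiffAt).comp x h1).differentiableAt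
    (by norm_num)

lemma lap2_neg (f : E2 → ℝ) (x : E2) : lap2 (fun y => -f y) x = -lap2 f x := by
  unfold lap2
  rw [← Finset.sum_neg_distrib]
  congr 1; funext i
  have h1 : (fun y => fderiv ℝ (fun z => -f z) y (EuclideanSpace.single i 1))
      = fun y => -(fderiv ℝ f y (EuclideanSpace.single i 1)) := by
    funext y
    rw [fderiv_fun_neg]
    simp
  rw [h1, fderiv_fun_neg]
  simp

lemma lap2_sub {f g : E2 → ℝ} {x : E2} (hf : ContDiffAt ℝ 2 f x) (hg : ContDiffAt ℝ 2 g x) :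
    lap2 (fun z => f z - g z) x = lap2 f x - lap2 g x := by
  unfold lap2
  rw [← Finset.sum_sub_distrib]
  congr 1; funext i
  set u := EuclideanSpace.single i (1:ℝ)
  have hEv : (fun y => fderiv ℝ (fun z => f z - g z) y u)
      =ᶠ[nhds x] fun y => fderiv ℝ f y u - fderiv ℝ g y u := by
    filter_upwards [hf.eventually (by simp), hg.eventually (by simp)] with y hfy hgy
    rw [fderiv_fun_sub (hfy.differentiableAt (by norm_num)) (hgy.differentiableAt (by norm_num))]
    simp
  rw [hEv.fderiv_eq, fderiv_fun_sub (fderiv_apply_diffAt hf u) (fderiv_apply_diffAt hg u)]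
  simp

set_option maxHeartbeats 2000000 in
lemma one_sided (d : ℤ) (Sd : ℝ → ℝ) (hSd0 : ∀ r, 0 ≤ Sd r)
    (R₀ R₁ : ℝ) (hR₀2 : 2 ≤ R₀) (hR₀1 : R₁ ≤ R₀) (hS9 : ∀ r, R₁ ≤ r → 0.9 < Sd r)
    (ψ : E2 → ℝ) (hsm : ContDiff ℝ 2 ψ) (B C A : ℝ) (hC : 0 < C) (hB : 0 ≤ B)
    (hA3C : 3*C ≤ A) (hAB : R₀*B ≤ A) (hA0 : 0 < A)
    (hbdd : ∀ z, |ψ z| ≤ B)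
    (hlog : ∀ z, |ψ z| ≤ C * Real.log (1 + ‖z‖))
    (hpde : ∀ z : E2, 1 < ‖z‖ →
      |lap2 ψ z + (1 - 3 * (Sd ‖z‖)^2) * ψ z - ((d : ℝ)^2 / ‖z‖^2) * ψ z| ≤
        C * Real.log ‖z‖ / ‖z‖^2) :
    ∀ z : E2, R₀ ≤ ‖z‖ → ψ z ≤ A / ‖z‖ := by
  intro z hz
  have hrz : 0 < ‖z‖ := lt_of_lt_of_le (by linarith) hz
  suffices hle : ∀ ε : ℝ, 0 < ε → ε ≤ C → ψ z ≤ A / ‖z‖ + ε * ‖z‖ by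
    by_contra hcon
    push_neg at hcon
    have ht : 0 < ψ z - A / ‖z‖ := by linarith
    have hε0 : 0 < min C ((ψ z - A / ‖z‖) / (2 * ‖z‖)) := lt_min hC (by positivity)
    have hle' := hle _ hε0 (min_le_left _ _)
    have hεt : min C ((ψ z - A / ‖z‖) / (2 * ‖z‖)) * ‖z‖ ≤ (ψ z - A / ‖z‖) / 2 := by
      have h1 := min_le_right C ((ψ z - A / ‖z‖) / (2 * ‖z‖))
      have h2 : min C ((ψ z - A / ‖z‖) / (2 * ‖z‖)) * ‖z‖ ≤ (ψ z - A / ‖z‖) / (2 * ‖z‖) * ‖z‖ :=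
        mul_le_mul_of_nonneg_right h1 (norm_nonneg z)
      have h3 : (ψ z - A / ‖z‖) / (2 * ‖z‖) * ‖z‖ = (ψ z - A / ‖z‖) / 2 := by
        field_simp
      linarith
    linarith
  intro ε hε0 hεC
  -- choose outer radius R
  have hlit := Real.isLittleO_log_id_atTop.def (show (0:ℝ) < ε/(2*C) by positivity)
  rw [Filter.eventually_atTop] at hlit
  obtain ⟨M, hM⟩ := hlit
  set R := max (max ‖z‖ R₀) (max M 1) with hR_def
  have hRz : ‖z‖ ≤ R := le_trans (le_max_left _ _) (le_max_left _ _)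
  have hRR₀ : R₀ ≤ R := le_trans (le_max_right _ _) (le_max_left _ _)
  have hRM : M ≤ R := le_trans (le_max_left _ _) (le_max_right _ _)
  have hR1 : 1 ≤ R := le_trans (le_max_right _ _) (le_max_right _ _)
  set K : Set E2 := {y | R₀ ≤ ‖y‖ ∧ ‖y‖ ≤ R} with hK_def
  have hKne : ∀ y ∈ K, y ≠ 0 := by
    intro y hy h0
    have h1 : R₀ ≤ ‖y‖ := hy.1
    rw [h0, norm_zero] at h1
    linarith
  have hKeq : K = Metric.closedBall (0:E2) R ∩ {y | R₀ ≤ ‖y‖} := by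
    ext y
    simp [hK_def, mem_closedBall_zero_iff]
    tauto
  have hKc : IsCompact K := by
    rw [hKeq]
    exact (isCompact_closedBall 0 R).inter_right (isClosed_le continuous_const continuous_norm)
  have hzK : z ∈ K := ⟨hz, hRz⟩
  set v : E2 → ℝ := fun y => wb A ε y - ψ y with hv_def
  have hvc : ContinuousOn v K := by
    intro y hy
    exact (((wb_contDiffAt A ε (hKne y hy)).continuousAt).sub
      hsm.continuous.continuousAt).continuousWithinAt
  obtain ⟨x₀, hx₀K, hmin⟩ := hKc.exists_isMinOn ⟨z, hzK⟩ hvc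
  have h0 : 0 ≤ v x₀ := by
    by_contra h0
    push_neg at h0
    set r := ‖x₀‖ with hr_def
    have hrR₀ : R₀ ≤ r := hx₀K.1
    have hrR : r ≤ R := hx₀K.2
    have hrpos : 0 < r := by linarith
    have hx0ne : x₀ ≠ 0 := hKne x₀ hx₀K
    have hwbval : wb A ε x₀ = A / r + ε * r := wb_val A ε hx0ne
    have hψ : wb A ε x₀ < ψ x₀ := by simp [hv_def] at h0; linarith
    -- not at inner boundary
    have hinner : R₀ < r := by
      rcases lt_or_eq_of_le hrR₀ with h | h
      · exact h
      · exfalso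
        have h1 : ψ x₀ ≤ B := le_trans (le_abs_self _) (hbdd x₀)
        have h2 : B ≤ A / R₀ := by
          rw [le_div_iff₀ (by linarith)]
          linarith [hAB]
        rw [hwbval, ← h] at hψ
        nlinarith [mul_nonneg hε0.le (le_trans (by linarith : (0:ℝ) ≤ R₀) (le_refl R₀))]
    -- not at outer boundary
    have houter : r < R := by
      rcases lt_or_eq_of_le hrR with h | h
      · exact h
      · exfalso
        have h1 : ψ x₀ ≤ C * Real.log (1 + r) := le_trans (le_abs_self _) (hlog x₀)
        rw [h] at h1
        have h2 : C * Real.log (1 + R) ≤ ε/2 * (1 + R) := by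
          have h3 := hM (1 + R) (by linarith)
          rw [Real.norm_eq_abs, Real.norm_eq_abs, id,
            abs_of_nonneg (Real.log_nonneg (by linarith)), abs_of_nonneg (by linarith)] at h3
          calc C * Real.log (1 + R) ≤ C * (ε/(2*C) * (1+R)) := by nlinarith
            _ = ε/2 * (1+R) := by field_simp
        have h4 : ε/2 * (1 + R) ≤ ε * R := by nlinarith
        rw [hwbval, h] at hψ
        have h5 : A / R > 0 := by positivity
        linarith
    -- interior minimum
    set U : Set E2 := {y | R₀ < ‖y‖ ∧ ‖y‖ < R} with hU_def
    have hUopen : IsOpen U := by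
      have : U = norm ⁻¹' (Set.Ioo R₀ R) := rfl
      rw [this]
      exact isOpen_Ioo.preimage continuous_norm
    have hKnhds : K ∈ nhds x₀ :=
      Filter.mem_of_superset (hUopen.mem_nhds ⟨hinner, houter⟩)
        (fun y hy => ⟨hy.1.le, hy.2.le⟩)
    have hlocmin : IsLocalMin v x₀ := hmin.isLocalMin hKnhds
    have hv2 : ContDiffAt ℝ 2 v x₀ := (wb_contDiffAt A ε hx0ne).sub hsm.contDiffAt
    have hlap : 0 ≤ lap2 v x₀ := lap2_nonneg_at_localmin hv2 hlocmin
    have hlapv : lap2 v x₀ = (A / r^3 + ε / r) - lap2 ψ x₀ := by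
      rw [hv_def]
      rw [lap2_sub (wb_contDiffAt A ε hx0ne) hsm.contDiffAt, wb_lap2 A ε hx0ne]
    -- pde bound
    have hr1 : (1:ℝ) < r := by linarith
    have hpde' := hpde x₀ hr1
    rw [abs_le] at hpde'
    have hlapψ : -(C * Real.log r / r^2) - (1 - 3 * (Sd r)^2) * ψ x₀
        + ((d:ℝ)^2 / r^2) * ψ x₀ ≤ lap2 ψ x₀ := by linarith [hpde'.1]
    -- coefficient bound
    have hc : (1 - 3 * (Sd r)^2) * ψ x₀ - ((d:ℝ)^2 / r^2) * ψ x₀ ≤ -ψ x₀ := by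
      have hS := hS9 r (by linarith)
      have hS0 := hSd0 r
      have hψpos : 0 < ψ x₀ := by
        rw [hwbval] at hψ
        exact lt_trans (add_pos (div_pos hA0 hrpos) (mul_pos hε0 hrpos)) hψ
      have hd2 : 0 ≤ ((d:ℝ)^2 / r^2) * ψ x₀ :=
        mul_nonneg (by positivity) hψpos.le
      have hcoef : 1 - 3 * (Sd r)^2 ≤ -1 := by nlinarith
      have h5 : (1 - 3 * (Sd r)^2) * ψ x₀ ≤ -1 * ψ x₀ :=
        mul_le_mul_of_nonneg_right hcoef hψpos.le
      linarith
    -- combine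
    have hmain : 0 ≤ A / r^3 + ε / r - (A / r + ε * r) + C * Real.log r / r^2 := by
      have := hlap
      rw [hlapv] at this
      have hψw : -ψ x₀ ≤ -(A / r + ε * r) := by rw [hwbval] at hψ; linarith
      linarith [hlapψ, hc, hψw]
    -- numeric contradiction
    have e1 : A / r^3 ≤ A / (4*r) := by
      apply div_le_div_of_nonneg_left hA0.le (by positivity)
      nlinarith
    have e2 : C * Real.log r / r^2 ≤ C / r := by
      rw [div_le_div_iff₀ (by positivity) hrpos]
      have hlr := Real.log_le_sub_one_of_pos hrpos
      nlinarith [mul_le_mul_of_nonneg_right (mul_le_mul_of_nonneg_left hlr hC.le) hrpos.le,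
        mul_pos hC hrpos]
    have e3 : ε / r ≤ ε * r := by
      rw [div_le_iff₀ hrpos]
      have h9 : (1:ℝ) ≤ r * r := by nlinarith
      nlinarith [mul_le_mul_of_nonneg_left h9 hε0.le]
    have e4 : A / (4*r) + C / r - A / r = (A/4 + C - A) / r := by ring
    have e5 : (A/4 + C - A) / r < 0 :=
      div_neg_of_neg_of_pos (by linarith) hrpos
    linarith
  -- conclude
  have hvz : 0 ≤ v z := le_trans h0 (isMinOn_iff.mp hmin z hzK)
  have := wb_val A ε (hKne z hzK)
  simp [hv_def] at hvz
  linarith [hvz, this.le, this.ge]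

theorem stmt17 (d : ℤ) (Sd : ℝ → ℝ) (hSd : ∀ r, 0 ≤ Sd r ∧ Sd r ≤ 1)
    (hSlim : Filter.Tendsto Sd Filter.atTop (nhds 1))
    (ψ : EuclideanSpace ℝ (Fin 2) → ℝ) (hsm : ContDiff ℝ 2 ψ)
    (B : ℝ) (hbdd : ∀ z, |ψ z| ≤ B)
    (C : ℝ) (hC : 0 < C)
    (hlog : ∀ z, |ψ z| ≤ C * Real.log (1 + ‖z‖))
    (hpde : ∀ z : EuclideanSpace ℝ (Fin 2), 1 < ‖z‖ →
      |lap2 ψ z + (1 - 3 * (Sd ‖z‖)^2) * ψ z - ((d : ℝ)^2 / ‖z‖^2) * ψ z| ≤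
        C * Real.log ‖z‖ / ‖z‖^2) :
    ∃ C' > 0, ∀ z, |ψ z| ≤ C' / (1 + ‖z‖) := by
  have hB0 : (0:ℝ) ≤ B := le_trans (abs_nonneg _) (hbdd 0)
  have h9 : ∀ᶠ r in Filter.atTop, (0.9:ℝ) < Sd r :=
    hSlim.eventually (eventually_gt_nhds (by norm_num))
  obtain ⟨R₁, hR₁⟩ := Filter.eventually_atTop.mp h9
  set R₀ := max 2 R₁ with hR₀_def
  have hR₀2 : 2 ≤ R₀ := le_max_left _ _
  have hR₀1 : R₁ ≤ R₀ := le_max_right _ _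
  have hR₀0 : 0 < R₀ := by linarith
  set A := R₀ * B + 3 * C + 1 with hA_def
  have hRB : 0 ≤ R₀ * B := mul_nonneg hR₀0.le hB0
  have hA0 : 0 < A := by simp only [hA_def]; linarith
  have hA3C : 3 * C ≤ A := by simp only [hA_def]; linarith
  have hAB : R₀ * B ≤ A := by simp only [hA_def]; linarith
  have hub := one_sided d Sd (fun r => (hSd r).1) R₀ R₁ hR₀2 hR₀1 (fun r hr => hR₁ r hr)
    ψ hsm B C A hC hB0 hA3C hAB hA0 hbdd hlog hpde
  have hlb := one_sided d Sd (fun r => (hSd r).1) R₀ R₁ hR₀2 hR₀1 (fun r hr => hR₁ r hr)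
    (fun y => -ψ y) hsm.neg B C A hC hB0 hA3C hAB hA0
    (fun z => by simpa using hbdd z) (fun z => by simpa using hlog z)
    (by
      intro z hz
      have h := hpde z hz
      show |lap2 (fun y => -ψ y) z + (1 - 3 * (Sd ‖z‖)^2) * -ψ z
        - ((d : ℝ)^2 / ‖z‖^2) * -ψ z| ≤ C * Real.log ‖z‖ / ‖z‖^2
      have e : lap2 (fun y => -ψ y) z + (1 - 3 * (Sd ‖z‖)^2) * -ψ z
          - ((d : ℝ)^2 / ‖z‖^2) * -ψ z
          = -(lap2 ψ z + (1 - 3 * (Sd ‖z‖)^2) * ψ z - ((d : ℝ)^2 / ‖z‖^2) * ψ z) := by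
        rw [lap2_neg]; ring
      rw [e, abs_neg]
      exact h)
  have habs : ∀ z : E2, R₀ ≤ ‖z‖ → |ψ z| ≤ A / ‖z‖ := by
    intro z hz
    refine abs_le.mpr ⟨?_, hub z hz⟩
    have := hlb z hz
    linarith
  refine ⟨max (2*A) ((1 + R₀) * B) + 1, by nlinarith [le_max_left (2*A) ((1 + R₀) * B)], ?_⟩
  intro z
  have h1z : (0:ℝ) < 1 + ‖z‖ := by positivity
  rcases le_or_gt ‖z‖ R₀ with h | h
  · rw [le_div_iff₀ h1z]
    have h2 : |ψ z| * (1 + ‖z‖) ≤ B * (1 + R₀) := by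
      apply mul_le_mul (hbdd z) (by linarith) h1z.le hB0
    nlinarith [le_max_right (2*A) ((1 + R₀) * B)]
  · have h2 := habs z h.le
    have hzpos : 0 < ‖z‖ := by linarith
    have h3 : A / ‖z‖ ≤ (max (2*A) ((1 + R₀) * B) + 1) / (1 + ‖z‖) := by
      rw [div_le_div_iff₀ hzpos h1z]
      have h4 : 2*A ≤ max (2*A) ((1 + R₀) * B) + 1 := by
        linarith [le_max_left (2*A) ((1 + R₀) * B)]
      nlinarith
    linarith
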